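/- Let σ be a finite type with Fintype.card σ = t, let n be a natural number with n > t, and let i : Fin n → ℕ be any function. Then the composite Q_{i 0} ∘ Q_{i 1} ∘ ⋯ ∘ Q_{i (n-1)} of Milnor derivations is the zero linear endomorphism of MvPolynomial σ (ZMod 2). (This is the key step in the paper's Lemma 2: any product of n Milnor derivations annihilates 𝔽₂[x₁, …, x_t] as soon as t ≤ n − 1.) -/

import Mathlib

open MvPolynomial

noncomputable def Q (σ : Type*) (i : ℕ) :
    MvPolynomial σ (ZMod 2) →ₗ[ZMod 2] MvPolynomial σ (ZMod 2) :=
  (MvPolynomial.mkDerivation (ZMod 2)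
    fun j => (MvPolynomial.X j : MvPolynomial σ (ZMod 2)) ^ (2 ^ (i + 1))).toLinearMap

/-- number of odd exponents of a monomial -/
def oddC {σ : Type*} [Fintype σ] (d : σ →₀ ℕ) : ℕ :=
  (Finset.univ.filter fun j => Odd (d j)).card

/-- filtration by number of odd exponents (strict) -/
noncomputable def M (σ : Type*) [Fintype σ] (k : ℕ) :
    Submodule (ZMod 2) (MvPolynomial σ (ZMod 2)) :=
  Submodule.span (ZMod 2) {p | ∃ d, oddC d < k ∧ p = monomial d 1}

lemma Q_apply {σ : Type*} (i : ℕ) (p : MvPolynomial σ (ZMod 2)) :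
    Q σ i p = (MvPolynomial.mkDerivation (ZMod 2)
      fun j => (MvPolynomial.X j : MvPolynomial σ (ZMod 2)) ^ (2 ^ (i + 1))) p := rfl

lemma Q_monomial_mem {σ : Type*} [Fintype σ] (i k : ℕ) (d : σ →₀ ℕ)
    (hd : oddC d < k + 1) : Q σ i (monomial d 1) ∈ M σ k := by
  classical
  rw [Q_apply, mkDerivation_monomial, one_smul, Finsupp.sum]
  apply Submodule.sum_mem
  intro j hj
  rcases Nat.even_or_odd (d j) with he | ho
  · have : ((d j : ZMod 2)) = 0 := by
      rw [← ZMod.natCast_mod, Nat.even_iff.mp he, Nat.cast_zero]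
    rw [this]
    simp
  · have h1 : ((d j : ZMod 2)) = 1 := by
      rw [← ZMod.natCast_mod, Nat.odd_iff.mp ho, Nat.cast_one]
    rw [h1]
    have heq : (monomial (d - Finsupp.single j 1) (1 : ZMod 2)) •
        (X j : MvPolynomial σ (ZMod 2)) ^ (2 ^ (i + 1))
        = monomial (d - Finsupp.single j 1 + Finsupp.single j (2 ^ (i + 1))) 1 := by
      rw [smul_eq_mul, X_pow_eq_monomial, monomial_mul, one_mul]
    rw [heq]
    apply Submodule.subset_span
    refine ⟨_, ?_, rfl⟩
    -- oddC of new monomial < k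
    have hsub : (Finset.univ.filter fun j' =>
        Odd (((d - Finsupp.single j 1 + Finsupp.single j (2 ^ (i + 1))) : σ →₀ ℕ) j'))
        ⊆ (Finset.univ.filter fun j' => Odd (d j')).erase j := by
      intro x hx
      simp only [Finset.mem_filter, Finset.mem_univ, true_and] at hx
      rcases eq_or_ne x j with rfl | hxj
      · exfalso
        rw [Finsupp.add_apply, Finsupp.tsub_apply, Finsupp.single_eq_same,
          Finsupp.single_eq_same] at hx
        have h2 : (2:ℕ) ^ (i + 1) % 2 = 0 := by
          have : (2:ℕ) ∣ 2 ^ (i + 1) := dvd_pow_self 2 (Nat.succ_ne_zero i)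
          omega
        have ho' := Nat.odd_iff.mp ho
        have hx' := Nat.odd_iff.mp hx
        omega
      · rw [Finset.mem_erase]
        refine ⟨hxj, ?_⟩
        simp only [Finset.mem_filter, Finset.mem_univ, true_and]
        rwa [Finsupp.add_apply, Finsupp.tsub_apply, Finsupp.single_eq_of_ne' (Ne.symm hxj),
          Finsupp.single_eq_of_ne' (Ne.symm hxj), Nat.sub_zero, Nat.add_zero] at hx
    have hcard := Finset.card_le_card hsub
    have hj_mem : j ∈ (Finset.univ.filter fun j' => Odd (d j')) := by
      simp [ho]
    have hpos : 0 < oddC d := Finset.card_pos.mpr ⟨j, hj_mem⟩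
    have := Finset.card_erase_of_mem hj_mem
    unfold oddC at *
    omega

lemma M_zero (σ : Type*) [Fintype σ] : M σ 0 = ⊥ := by
  rw [M]
  convert Submodule.span_empty
  ext p
  simp

lemma Q_mem_step {σ : Type*} [Fintype σ] (i k : ℕ) (p : MvPolynomial σ (ZMod 2))
    (hp : p ∈ M σ k) : Q σ i p ∈ M σ (k - 1) := by
  cases k with
  | zero =>
    rw [M_zero] at hp
    simp only [Submodule.mem_bot] at hp
    subst hp
    simp
  | succ k =>
    simp only [Nat.succ_sub_one]
    induction hp using Submodule.span_induction with
    | mem x hx =>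
      obtain ⟨d, hd, rfl⟩ := hx
      exact Q_monomial_mem i k d hd
    | zero => simp
    | add x y _ _ hx hy => rw [map_add]; exact Submodule.add_mem _ hx hy
    | smul c x _ hx => rw [map_smul]; exact Submodule.smul_mem _ _ hx

lemma mem_M_top {σ : Type*} [Fintype σ] (p : MvPolynomial σ (ZMod 2)) :
    p ∈ M σ (Fintype.card σ + 1) := by
  rw [p.as_sum]
  apply Submodule.sum_mem
  intro d _
  have : (monomial d) (coeff d p) = (coeff d p) • monomial d 1 := by
    rw [smul_monomial, smul_eq_mul, mul_one]
  rw [this]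
  apply Submodule.smul_mem
  apply Submodule.subset_span
  refine ⟨d, ?_, rfl⟩
  have : oddC d ≤ Fintype.card σ := Finset.card_filter_le _ _
  omega

lemma foldr_mem {σ : Type*} [Fintype σ] (L : List ℕ) (k : ℕ)
    (p : MvPolynomial σ (ZMod 2)) (hp : p ∈ M σ k) :
    ((L.map (Q σ)).foldr (· ∘ₗ ·) LinearMap.id) p ∈ M σ (k - L.length) := by
  induction L generalizing k p with
  | nil => simpa using hp
  | cons a L ih =>
    simp only [List.map_cons, List.foldr_cons, LinearMap.comp_apply, List.length_cons]
    have h1 := Q_mem_step a (k - L.length) _ (ih k p hp)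
    have : k - L.length - 1 = k - (L.length + 1) := by omega
    rwa [this] at h1

theorem composite_milnor_derivations_eq_zero
    (σ : Type*) [Fintype σ] (t : ℕ) (ht : Fintype.card σ = t)
    (n : ℕ) (hn : n > t) (i : Fin n → ℕ) :
    (List.ofFn fun k : Fin n => Q σ (i k)).foldr (· ∘ₗ ·) LinearMap.id = 0 := by
  apply LinearMap.ext
  intro p
  have hofn : (List.ofFn fun k : Fin n => Q σ (i k)) = (List.ofFn i).map (Q σ) := by
    rw [List.map_ofFn]; rfl
  rw [hofn]
  have h := foldr_mem (List.ofFn i) (Fintype.card σ + 1) p (mem_M_top p)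
  have hlen : Fintype.card σ + 1 - (List.ofFn i).length = 0 := by
    rw [List.length_ofFn]; omega
  rw [hlen, M_zero, Submodule.mem_bot] at h
  simpa using h
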